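/- Let Ω ⊂ ℝ³ be open, bounded and convex with L³(Ω) = 1, let m be a mass vector, T > 0, and let z = (z_1,…,z_N) : [0,T] → ℝ^{3N} be a continuously differentiable solution of the seed ODE, with associated weight vectors w(t) satisfying L³(C_j(z(t),w(t))) = m_j for all j and t. Then the quadratic transport cost t ↦ Σ_{i=1}^N ∫_{C_i(z(t),w(t))} |x − z_i(t)|² dx is constant on [0,T]. (This quantity equals the squared Wasserstein 2-distance between L³⌐Ω and the discrete measure Σ_i m_i δ_{z_i(t)}.) -/

import Mathlib

open MeasureTheory Set Filter
open scoped ENNReal Topology RealInnerProductSpace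

set_option maxHeartbeats 1000000

noncomputable section

/-- Geostrophic space: `ℝ³` with the Euclidean norm. -/
abbrev E3 : Type := EuclideanSpace ℝ (Fin 3)

/-- The matrix `J` encoding planetary rotation: `J₁₂ = -1`, `J₂₁ = 1`, all other entries `0`. -/
def matJ : Matrix (Fin 3) (Fin 3) ℝ := !![0, -1, 0; 1, 0, 0; 0, 0, 0]

/-- `J` as a (continuous) linear map on `ℝ³`. -/
def J : E3 →L[ℝ] E3 := LinearMap.toContinuousLinearMap (Matrix.toEuclideanLin matJ)

/-- The Laguerre cell `C_i(z, w)` of `Ω` generated by seeds `z` and weights `w`. -/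
def lagCell {N : ℕ} (Ω : Set E3) (z : Fin N → E3) (w : Fin N → ℝ) (i : Fin N) : Set E3 :=
  {x | x ∈ Ω ∧ ∀ j, ‖x - z i‖ ^ 2 - w i ≤ ‖x - z j‖ ^ 2 - w j}

/-- `z : [0,T] → ℝ^{3N}` is a continuously differentiable solution of the seed ODE
`ż_i = J (z_i - x_i(z))`, where `x_i(z)` is the centroid of the `i`-th cell of the optimal
Laguerre tessellation of `Ω` with masses `m`. -/
def SeedODESol (Ω : Set E3) {N : ℕ} (m : Fin N → ℝ) (T : ℝ) (z : ℝ → Fin N → E3) : Prop :=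
  ContDiffOn ℝ 1 z (Icc 0 T) ∧
  ∀ t ∈ Icc (0:ℝ) T,
    (∀ i j : Fin N, i ≠ j → z t i ≠ z t j) ∧
    ∃ w : Fin N → ℝ,
      (∀ j, volume (lagCell Ω (z t) w j) = ENNReal.ofReal (m j)) ∧
      ∀ i, HasDerivWithinAt (fun s => z s i)
        (J (z t i - (m i)⁻¹ • ∫ x in lagCell Ω (z t) w i, x)) (Icc 0 T) t

private lemma inner_J_self (u : E3) : ⟪u, J u⟫ = 0 := by
  simp [J, matJ, Matrix.toEuclideanLin, PiLp.inner_apply, Fin.sum_univ_three,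
    Matrix.mulVec, dotProduct, Fin.sum_univ_succ, Matrix.vecHead, Matrix.vecTail]
  ring

private lemma lagCell_subset {N : ℕ} (Ω : Set E3) (z : Fin N → E3) (w : Fin N → ℝ) (i : Fin N) :
    lagCell Ω z w i ⊆ Ω := fun _ hx => hx.1

private lemma measurableSet_lagCell {N : ℕ} {Ω : Set E3} (hΩo : IsOpen Ω) (z : Fin N → E3)
    (w : Fin N → ℝ) (i : Fin N) : MeasurableSet (lagCell Ω z w i) := by
  have : lagCell Ω z w i = Ω ∩ ⋂ j, {x : E3 | ‖x - z i‖ ^ 2 - w i ≤ ‖x - z j‖ ^ 2 - w j} := by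
    ext x; simp [lagCell, Set.mem_iInter]
  rw [this]
  refine hΩo.measurableSet.inter (MeasurableSet.iInter fun j => ?_)
  exact (isClosed_le (by fun_prop) (by fun_prop)).measurableSet

private lemma lagCell_cover {N : ℕ} [Nonempty (Fin N)] {Ω : Set E3} (z : Fin N → E3) (w : Fin N → ℝ)
    {x : E3} (hx : x ∈ Ω) : ∃ i, x ∈ lagCell Ω z w i := by
  obtain ⟨i, -, hi⟩ := Finset.exists_min_image Finset.univ
    (fun j => ‖x - z j‖ ^ 2 - w j) ⟨Classical.arbitrary _, Finset.mem_univ _⟩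
  exact ⟨i, hx, fun j => hi j (Finset.mem_univ j)⟩

-- hyperplane is null

private lemma null_inner_eq (v : E3) (hv : v ≠ 0) (c : ℝ) : volume {x : E3 | ⟪x, v⟫ = c} = 0 := by
  set f : E3 →ₗ[ℝ] ℝ := (innerSL ℝ v).toLinearMap with hf
  have hfapp : ∀ x : E3, f x = ⟪x, v⟫ := fun x => by
    simpa [hf] using real_inner_comm x v
  have hnorm : (0:ℝ) < ‖v‖ ^ 2 := pow_pos (norm_pos_iff.mpr hv) 2
  have hfv : f v ≠ 0 := by rw [hfapp, real_inner_self_eq_norm_sq]; exact hnorm.ne'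
  have hker : LinearMap.ker f ≠ ⊤ := fun h => hfv (by
    have : v ∈ LinearMap.ker f := by rw [h]; trivial
    simpa using this)
  set x₀ : E3 := (c / f v) • v with hx₀
  have hfx₀ : f x₀ = c := by
    rw [hx₀, LinearMap.map_smul, smul_eq_mul]; field_simp
  have hset : {x : E3 | ⟪x, v⟫ = c} = (· + -x₀) ⁻¹' (LinearMap.ker f : Set E3) := by
    ext x
    simp only [Set.mem_setOf_eq, Set.mem_preimage, SetLike.mem_coe, LinearMap.mem_ker, map_add,
      map_neg, hfx₀, ← hfapp x]
    constructor
    · intro h; rw [h]; ring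
    · intro h; linarith
  rw [hset, measure_preimage_add_right]
  exact Measure.addHaar_submodule _ _ hker

private lemma null_lagCell_inter {N : ℕ} {Ω : Set E3} {z : Fin N → E3} {w : Fin N → ℝ} {i j : Fin N}
    (hzij : z i ≠ z j) : volume (lagCell Ω z w i ∩ lagCell Ω z w j) = 0 := by
  refine measure_mono_null (t := {x : E3 | ⟪x, (2:ℝ) • (z j - z i)⟫ =
      ‖z j‖ ^ 2 - w j - ‖z i‖ ^ 2 + w i}) ?_ (null_inner_eq _ (by
        intro h
        apply hzij
        have := smul_eq_zero.mp h
        simp at this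
        exact sub_eq_zero.mp this |>.symm ) _)
  rintro x ⟨⟨-, hxi⟩, ⟨-, hxj⟩⟩
  have h1 := hxi j
  have h2 := hxj i
  have heq : ‖x - z i‖ ^ 2 - w i = ‖x - z j‖ ^ 2 - w j := le_antisymm h1 h2
  rw [@norm_sub_sq_real, @norm_sub_sq_real] at heq
  simp only [Set.mem_setOf_eq, inner_smul_right, inner_sub_right]
  linarith

private lemma integrableOn_subset {Ω : Set E3} (hΩb : Bornology.IsBounded Ω)
    {F : Type*} [NormedAddCommGroup F] [NormedSpace ℝ F] {f : E3 → F} (hf : Continuous f)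
    {s : Set E3} (hs : s ⊆ Ω) : IntegrableOn f s := by
  have hc : IsCompact (closure Ω) := hΩb.isCompact_closure
  exact (hf.continuousOn.integrableOn_compact hc).mono_set (hs.trans subset_closure)

private lemma setIntegral_sum_cells {N : ℕ} [Nonempty (Fin N)] {Ω : Set E3} (hΩo : IsOpen Ω)
    (hΩb : Bornology.IsBounded Ω) {z : Fin N → E3} {w : Fin N → ℝ}
    (hz : ∀ i j : Fin N, i ≠ j → z i ≠ z j)
    {F : Type*} [NormedAddCommGroup F] [NormedSpace ℝ F] {f : E3 → F} (hf : Continuous f)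
    {S : Set E3} (hSm : MeasurableSet S) (hS : S ⊆ Ω) :
    ∫ x in S, f x = ∑ j, ∫ x in S ∩ lagCell Ω z w j, f x := by
  have hU : (⋃ j, S ∩ lagCell Ω z w j) = S := by
    rw [← Set.inter_iUnion]
    refine Set.inter_eq_left.mpr fun x hx => ?_
    obtain ⟨i, hi⟩ := lagCell_cover z w (hS hx)
    exact Set.mem_iUnion.mpr ⟨i, hi⟩
  have := integral_iUnion_ae (μ := volume) (f := f)
    (s := fun j => S ∩ lagCell Ω z w j)
    (fun i => (hSm.inter (measurableSet_lagCell hΩo z w i)).nullMeasurableSet)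
    (fun i j hij => by
      show volume _ = 0
      refine measure_mono_null ?_ (null_lagCell_inter (Ω := Ω) (w := w) (hz i j hij))
      exact Set.inter_subset_inter Set.inter_subset_right Set.inter_subset_right)
    (by rw [hU]; exact integrableOn_subset hΩb hf hS)
  rw [hU] at this
  rw [this, tsum_fintype]

private lemma volume_sum_cells {N : ℕ} [Nonempty (Fin N)] {Ω : Set E3} (hΩo : IsOpen Ω)
    (hΩb : Bornology.IsBounded Ω) {z : Fin N → E3} {w : Fin N → ℝ}
    (hz : ∀ i j : Fin N, i ≠ j → z i ≠ z j)
    {S : Set E3} (hSm : MeasurableSet S) (hS : S ⊆ Ω) :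
    (volume S).toReal = ∑ j, (volume (S ∩ lagCell Ω z w j)).toReal := by
  have h := setIntegral_sum_cells (f := fun _ => (1:ℝ)) (w := w) hΩo hΩb hz continuous_const hSm hS
  simpa [setIntegral_const, measureReal_def] using h

private lemma continuous_cost (a : E3) : Continuous fun x : E3 => ‖x - a‖ ^ 2 :=
  ((continuous_id.sub continuous_const).norm.pow 2)

private lemma cost_le {N : ℕ} [Nonempty (Fin N)] {Ω : Set E3} (hΩo : IsOpen Ω)
    (hΩb : Bornology.IsBounded Ω) {m : Fin N → ℝ} (hm : ∀ i, 0 < m i)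
    {z₁ z₂ : Fin N → E3} {w₁ w₂ : Fin N → ℝ}
    (hz₁ : ∀ i j : Fin N, i ≠ j → z₁ i ≠ z₁ j) (hz₂ : ∀ i j : Fin N, i ≠ j → z₂ i ≠ z₂ j)
    (hw₁ : ∀ j, volume (lagCell Ω z₁ w₁ j) = ENNReal.ofReal (m j))
    (hw₂ : ∀ j, volume (lagCell Ω z₂ w₂ j) = ENNReal.ofReal (m j)) :
    ∑ j, ∫ x in lagCell Ω z₂ w₂ j, ‖x - z₂ j‖ ^ 2 ≤
      ∑ i, ∫ x in lagCell Ω z₁ w₁ i, ‖x - z₂ i‖ ^ 2 := by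
  set A := lagCell Ω z₁ w₁ with hA
  set B := lagCell Ω z₂ w₂ with hB
  have hAm : ∀ i, MeasurableSet (A i) := measurableSet_lagCell hΩo z₁ w₁
  have hBm : ∀ j, MeasurableSet (B j) := measurableSet_lagCell hΩo z₂ w₂
  have hAs : ∀ i, A i ⊆ Ω := fun i x hx => hx.1
  have hBs : ∀ j, B j ⊆ Ω := fun j x hx => hx.1
  set ν : Fin N → Fin N → ℝ := fun i j => (volume (A i ∩ B j)).toReal with hν
  have hrow : ∀ i, ∑ j, ν i j = m i := fun i => by
    rw [← volume_sum_cells (w := w₂) hΩo hΩb hz₂ (hAm i) (hAs i), hw₁,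
      ENNReal.toReal_ofReal (hm i).le]
  have hcol : ∀ j, ∑ i, ν i j = m j := fun j => by
    have := volume_sum_cells (w := w₁) hΩo hΩb hz₁ (hBm j) (hBs j)
    rw [hw₂, ENNReal.toReal_ofReal (hm j).le] at this
    rw [this]
    exact Finset.sum_congr rfl fun i _ => by rw [hν, Set.inter_comm]
  have hΩfin : volume Ω < ⊤ :=
    (measure_mono subset_closure).trans_lt hΩb.isCompact_closure.measure_lt_top
  have hint : ∀ (a : E3) (S : Set E3), S ⊆ Ω → IntegrableOn (fun x => ‖x - a‖ ^ 2) S :=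
    fun a S hS => integrableOn_subset hΩb (continuous_cost a) hS
  have key : ∀ i j, ∫ x in A i ∩ B j, ‖x - z₂ j‖ ^ 2 ≤
      (∫ x in A i ∩ B j, ‖x - z₂ i‖ ^ 2) + (w₂ j - w₂ i) * ν i j := by
    intro i j
    have hsub : A i ∩ B j ⊆ Ω := fun x hx => hx.1.1
    have h1 : ∫ x in A i ∩ B j, ‖x - z₂ j‖ ^ 2 ≤
        ∫ x in A i ∩ B j, (‖x - z₂ i‖ ^ 2 + (w₂ j - w₂ i)) := by
      refine setIntegral_mono_on (hint _ _ hsub) ((hint _ _ hsub).add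
        ((integrableOn_const_iff).mpr (Or.inr ?_))) ((hAm i).inter (hBm j)) ?_
      · exact (measure_mono hsub).trans_lt hΩfin
      · intro x hx
        have := hx.2.2 i
        linarith
    have h2 : ∫ x in A i ∩ B j, (‖x - z₂ i‖ ^ 2 + (w₂ j - w₂ i)) =
        (∫ x in A i ∩ B j, ‖x - z₂ i‖ ^ 2) + (w₂ j - w₂ i) * ν i j := by
      rw [integral_add (hint _ _ hsub) ((integrableOn_const_iff).mpr
        (Or.inr ((measure_mono hsub).trans_lt hΩfin))), setIntegral_const, smul_eq_mul, measureReal_def, hν,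
        mul_comm]
    linarith [h1, h2]
  calc ∑ j, ∫ x in B j, ‖x - z₂ j‖ ^ 2
      = ∑ j, ∑ i, ∫ x in A i ∩ B j, ‖x - z₂ j‖ ^ 2 := by
        refine Finset.sum_congr rfl fun j _ => ?_
        rw [setIntegral_sum_cells (w := w₁) hΩo hΩb hz₁ (continuous_cost (z₂ j)) (hBm j) (hBs j)]
        exact Finset.sum_congr rfl fun i _ => by rw [Set.inter_comm]
    _ = ∑ i, ∑ j, ∫ x in A i ∩ B j, ‖x - z₂ j‖ ^ 2 := Finset.sum_comm
    _ ≤ ∑ i, ∑ j, ((∫ x in A i ∩ B j, ‖x - z₂ i‖ ^ 2) + (w₂ j - w₂ i) * ν i j) :=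
        Finset.sum_le_sum fun i _ => Finset.sum_le_sum fun j _ => key i j
    _ = (∑ i, ∑ j, ∫ x in A i ∩ B j, ‖x - z₂ i‖ ^ 2)
          + ((∑ j, w₂ j * m j) - ∑ i, w₂ i * m i) := by
        simp only [Finset.sum_add_distrib]
        congr 1
        have hthis : ∀ i, ∑ j, (w₂ j - w₂ i) * ν i j = (∑ j, w₂ j * ν i j) - w₂ i * m i := by
          intro i
          rw [← hrow i, Finset.mul_sum, ← Finset.sum_sub_distrib]
          exact Finset.sum_congr rfl fun j _ => by ring
        rw [Finset.sum_congr rfl (fun i _ => hthis i), Finset.sum_sub_distrib]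
        congr 1
        rw [Finset.sum_comm]
        exact Finset.sum_congr rfl fun j _ => by rw [← Finset.mul_sum, hcol j, mul_comm]
    _ = ∑ i, ∫ x in A i, ‖x - z₂ i‖ ^ 2 := by
        rw [sub_self, add_zero]
        refine Finset.sum_congr rfl fun i _ => ?_
        rw [setIntegral_sum_cells (w := w₂) hΩo hΩb hz₂ (continuous_cost (z₂ i)) (hAm i) (hAs i)]

private lemma integral_cost_expand {Ω : Set E3} (hΩb : Bornology.IsBounded Ω)
    {A : Set E3} (hsub : A ⊆ Ω) {mi : ℝ}
    (hvol : (volume A).toReal = mi) (a b : E3) :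
    ∫ x in A, ‖x - b‖ ^ 2 =
      (∫ x in A, ‖x - a‖ ^ 2) - 2 * ⟪(∫ x in A, x) - mi • a, b - a⟫ + mi * ‖b - a‖ ^ 2 := by
  have hΩfin : volume Ω < ⊤ :=
    (measure_mono subset_closure).trans_lt hΩb.isCompact_closure.measure_lt_top
  have hAfin : volume A < ⊤ := (measure_mono hsub).trans_lt hΩfin
  have hint1 : IntegrableOn (fun x : E3 => ‖x - a‖ ^ 2) A :=
    integrableOn_subset hΩb (continuous_cost a) hsub
  have hintid : IntegrableOn (fun x : E3 => x) A :=
    integrableOn_subset hΩb continuous_id hsub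
  have hintinner : IntegrableOn (fun x : E3 => ⟪x - a, b - a⟫) A :=
    integrableOn_subset hΩb ((continuous_id.sub continuous_const).inner continuous_const) hsub
  have hintsub : IntegrableOn (fun x : E3 => x - a) A :=
    integrableOn_subset hΩb (continuous_id.sub continuous_const) hsub
  have hint2 : IntegrableOn (fun x : E3 => 2 * ⟪x - a, b - a⟫) A := hintinner.const_mul 2
  have hptw : ∀ x : E3, ‖x - b‖ ^ 2 = ‖x - a‖ ^ 2 - 2 * ⟪x - a, b - a⟫ + ‖b - a‖ ^ 2 := by
    intro x
    have : x - b = (x - a) - (b - a) := by abel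
    rw [this, norm_sub_sq_real]
  have hconst : ∀ c : ℝ, IntegrableOn (fun _ : E3 => c) A :=
    fun c => (integrableOn_const_iff).mpr (Or.inr hAfin)
  have hconstE : ∀ c : E3, IntegrableOn (fun _ : E3 => c) A :=
    fun c => (integrableOn_const_iff).mpr (Or.inr hAfin)
  have hinner_eq : ∫ x in A, ⟪x - a, b - a⟫ = ⟪(∫ x in A, x) - mi • a, b - a⟫ := by
    have h1 : ∫ x in A, ⟪x - a, b - a⟫ = ∫ x in A, ⟪b - a, x - a⟫ := by
      refine integral_congr_ae (Filter.Eventually.of_forall fun x => real_inner_comm _ _)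
    rw [h1, integral_inner hintsub (b - a), integral_sub hintid (hconstE a),
      setIntegral_const, measureReal_def, hvol, real_inner_comm]
  rw [show (fun x : E3 => ‖x - b‖ ^ 2) = fun x => ‖x - a‖ ^ 2 - 2 * ⟪x - a, b - a⟫ + ‖b - a‖ ^ 2
    from funext hptw]
  have hint3 : IntegrableOn (fun x : E3 => ‖x - a‖ ^ 2 - 2 * ⟪x - a, b - a⟫) A :=
    hint1.sub hint2
  rw [integral_add hint3 (hconst _), integral_sub hint1 hint2, integral_const_mul, hinner_eq,
    setIntegral_const, measureReal_def, hvol, smul_eq_mul]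

/-- **Conservation of the quadratic transport cost along solutions of the seed ODE**
(Remark 3.9 of Bourne, Egan, Pelloni, Wilkinson): the squared Wasserstein 2-distance
`W₂²(L³⌐Ω, Σ_i m_i δ_{z_i(t)}) = Σ_i ∫_{C_i(z(t),w(t))} |x - z_i(t)|² dx` is
constant in time. -/
theorem seed_ode_transport_cost_conservation
    (Ω : Set E3) (hΩo : IsOpen Ω) (hΩb : Bornology.IsBounded Ω) (hΩc : Convex ℝ Ω)
    (hΩv : volume Ω = 1)
    {N : ℕ} (m : Fin N → ℝ) (hm : ∀ i, 0 < m i) (hm1 : ∑ i, m i = 1)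
    (T : ℝ) (hT : 0 < T) (z : ℝ → Fin N → E3) (hsol : SeedODESol Ω m T z)
    (w : ℝ → Fin N → ℝ)
    (hw : ∀ t ∈ Icc (0:ℝ) T, ∀ j, volume (lagCell Ω (z t) (w t) j) = ENNReal.ofReal (m j)) :
    ∃ c : ℝ, ∀ t ∈ Icc (0:ℝ) T,
      (∑ i, ∫ x in lagCell Ω (z t) (w t) i, ‖x - z t i‖ ^ 2) = c := by
  have hNe : Nonempty (Fin N) := by
    by_contra h
    rw [not_nonempty_iff] at h
    rw [Finset.univ_eq_empty, Finset.sum_empty] at hm1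
    exact one_ne_zero hm1.symm
  obtain ⟨hcd, hode⟩ := hsol
  choose hne wsel hwsel hder using hode
  have hUD : UniqueDiffOn ℝ (Icc (0:ℝ) T) := uniqueDiffOn_Icc hT
  have hcpt : IsCompact (Icc (0:ℝ) T) := isCompact_Icc
  -- component regularity
  have hzi : ∀ i, ContDiffOn ℝ 1 (fun s => z s i) (Icc 0 T) := fun i =>
    (ContinuousLinearMap.proj (R := ℝ) (φ := fun _ : Fin N => E3) i).contDiff.comp_contDiffOn hcd
  set g : Fin N → ℝ → E3 := fun i t => derivWithin (fun s => z s i) (Icc 0 T) t with hgdef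
  have hgc : ∀ i, ContinuousOn (g i) (Icc 0 T) := fun i =>
    (hzi i).continuousOn_derivWithin hUD le_rfl
  have hgt : ∀ (t : ℝ) (ht : t ∈ Icc (0:ℝ) T) (i : Fin N), g i t =
      J (z t i - (m i)⁻¹ • ∫ x in lagCell Ω (z t) (wsel t ht) i, x) :=
    fun t ht i => (hder t ht i).derivWithin (hUD t ht)
  have hgd : ∀ (i : Fin N) (t : ℝ), t ∈ Icc (0:ℝ) T →
      HasDerivWithinAt (fun s => z s i) (g i t) (Icc 0 T) t := fun i t ht => by
    rw [hgt t ht i]; exact hder t ht i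
  -- bounds
  obtain ⟨R₀, hR₀⟩ := hΩb.exists_norm_le
  set R := max R₀ 0 with hRdef
  have hR : ∀ x ∈ Ω, ‖x‖ ≤ R := fun x hx => (hR₀ x hx).trans (le_max_left _ _)
  have hR0 : 0 ≤ R := le_max_right _ _
  choose K₀ hK₀ using fun i => hcpt.exists_bound_of_continuousOn (hgc i)
  set K := max (Finset.univ.sup' Finset.univ_nonempty K₀) 0 with hKdef
  have hK : ∀ i, ∀ τ ∈ Icc (0:ℝ) T, ‖g i τ‖ ≤ K := fun i τ hτ =>
    (hK₀ i τ hτ).trans ((Finset.le_sup' K₀ (Finset.mem_univ i)).trans (le_max_left _ _))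
  have hK0 : 0 ≤ K := le_max_right _ _
  choose Z₀ hZ₀ using fun i => hcpt.exists_bound_of_continuousOn ((hzi i).continuousOn)
  set Cz := max (Finset.univ.sup' Finset.univ_nonempty Z₀) 0 with hCzdef
  have hCz : ∀ i, ∀ τ ∈ Icc (0:ℝ) T, ‖z τ i‖ ≤ Cz := fun i τ hτ =>
    (hZ₀ i τ hτ).trans ((Finset.le_sup' Z₀ (Finset.mem_univ i)).trans (le_max_left _ _))
  set Cb := R + Cz with hCbdef
  have hCb0 : (0:ℝ) ≤ Cb := add_nonneg hR0 (le_max_right _ _)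
  -- volumes
  have hΩfin : volume Ω < ⊤ :=
    (measure_mono subset_closure).trans_lt hΩb.isCompact_closure.measure_lt_top
  have hvolA : ∀ (t : ℝ) (ht : t ∈ Icc (0:ℝ) T) (i : Fin N),
      (volume (lagCell Ω (z t) (wsel t ht) i)).toReal = m i := fun t ht i => by
    rw [hwsel t ht i, ENNReal.toReal_ofReal (hm i).le]
  -- centroid integral bound : ‖∫ x in cell, x - m i • z t i‖ ≤ m i * Cb
  have hcent : ∀ (t : ℝ) (ht : t ∈ Icc (0:ℝ) T) (i : Fin N),
      ‖(∫ x in lagCell Ω (z t) (wsel t ht) i, x) - m i • z t i‖ ≤ m i * Cb := by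
    intro t ht i
    have h1 : ‖∫ x in lagCell Ω (z t) (wsel t ht) i, x‖ ≤ R * m i := by
      have := norm_setIntegral_le_of_norm_le_const (μ := volume)
        (s := lagCell Ω (z t) (wsel t ht) i) (f := fun x : E3 => x) (C := R)
        ((measure_mono (lagCell_subset Ω _ _ i)).trans_lt hΩfin)
        (fun x hx => hR x (lagCell_subset Ω _ _ i hx))
      rwa [measureReal_def, hvolA t ht i] at this
    calc ‖(∫ x in lagCell Ω (z t) (wsel t ht) i, x) - m i • z t i‖
        ≤ ‖∫ x in lagCell Ω (z t) (wsel t ht) i, x‖ + ‖m i • z t i‖ := norm_sub_le _ _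
      _ ≤ R * m i + m i * Cz := by
          refine add_le_add h1 ?_
          rw [norm_smul, Real.norm_eq_abs, abs_of_pos (hm i)]
          exact mul_le_mul_of_nonneg_left (hCz i t ht) (hm i).le
      _ = m i * Cb := by rw [hCbdef]; ring
  -- Lipschitz bound
  have hlip : ∀ (i : Fin N), ∀ t ∈ Icc (0:ℝ) T, ∀ s ∈ Icc (0:ℝ) T,
      ‖z s i - z t i‖ ≤ K * |s - t| := by
    intro i t ht s hs
    have := (convex_Icc (0:ℝ) T).norm_image_sub_le_of_norm_hasDerivWithin_le
      (f' := g i) (fun τ hτ => hgd i τ hτ) (fun τ hτ => hK i τ hτ) ht hs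
    simpa [Real.norm_eq_abs] using this
  -- uniform Taylor estimate
  have htay : ∀ ε > (0:ℝ), ∃ δ > (0:ℝ), ∀ (i : Fin N), ∀ t ∈ Icc (0:ℝ) T, ∀ s ∈ Icc (0:ℝ) T,
      |s - t| < δ → ‖z s i - z t i - (s - t) • g i t‖ ≤ ε * |s - t| := by
    intro ε hε
    have huc : ∀ i, ∃ δ > (0:ℝ), ∀ a ∈ Icc (0:ℝ) T, ∀ b ∈ Icc (0:ℝ) T,
        dist a b < δ → dist (g i a) (g i b) < ε := fun i =>
      Metric.uniformContinuousOn_iff.mp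
        (hcpt.uniformContinuousOn_of_continuous (hgc i)) ε hε
    choose δi hδi hδi' using huc
    refine ⟨Finset.univ.inf' Finset.univ_nonempty δi, ?_, ?_⟩
    · exact (Finset.lt_inf'_iff _).mpr fun i _ => hδi i
    · intro i t ht s hs hst
      have hδle : Finset.univ.inf' Finset.univ_nonempty δi ≤ δi i :=
        Finset.inf'_le δi (Finset.mem_univ i)
      have hsubI : uIcc t s ⊆ Icc (0:ℝ) T := uIcc_subset_Icc ht hs
      have hder2 : ∀ τ ∈ uIcc t s, HasDerivWithinAt (fun r => z r i - r • g i t)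
          (g i τ - g i t) (uIcc t s) τ := by
        intro τ hτ
        have h1 := (hgd i τ (hsubI hτ)).mono hsubI
        have h2 : HasDerivWithinAt (fun r : ℝ => r • g i t) (g i t) (uIcc t s) τ := by
          simpa using ((hasDerivAt_id τ).smul_const (g i t)).hasDerivWithinAt
        exact h1.sub h2
      have hbd : ∀ τ ∈ uIcc t s, ‖g i τ - g i t‖ ≤ ε := by
        intro τ hτ
        have h3 : |τ - t| ≤ |s - t| := abs_sub_left_of_mem_uIcc hτ
        have := hδi' i τ (hsubI hτ) t ht (by
          rw [Real.dist_eq]; exact lt_of_le_of_lt h3 (lt_of_lt_of_le hst hδle))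
        rw [dist_eq_norm] at this
        exact this.le
      have := (convex_uIcc t s).norm_image_sub_le_of_norm_hasDerivWithin_le hder2 hbd
        left_mem_uIcc right_mem_uIcc
      have heq : (z s i - s • g i t) - (z t i - t • g i t)
          = z s i - z t i - (s - t) • g i t := by
        rw [sub_smul]; abel
      rw [heq, Real.norm_eq_abs] at this
      exact this
  
  set F : ℝ → ℝ := fun t => ∑ i, ∫ x in lagCell Ω (z t) (w t) i, ‖x - z t i‖ ^ 2 with hFdef
  have costEq : ∀ (t : ℝ) (ht : t ∈ Icc (0:ℝ) T),
      F t = ∑ i, ∫ x in lagCell Ω (z t) (wsel t ht) i, ‖x - z t i‖ ^ 2 := fun t ht =>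
    le_antisymm
      (cost_le hΩo hΩb hm (hne t ht) (hne t ht) (hwsel t ht) (hw t ht))
      (cost_le hΩo hΩb hm (hne t ht) (hne t ht) (hw t ht) (hwsel t ht))
  have main_est : ∀ ε > (0:ℝ), ∃ δ > (0:ℝ), ∀ t ∈ Icc (0:ℝ) T, ∀ s ∈ Icc (0:ℝ) T,
      |s - t| < δ → F s - F t ≤ ε * |s - t| := by
    intro ε hε
    have hd1 : (0:ℝ) < ε / (2 * (2 * Cb + 1)) := by positivity
    obtain ⟨δ₀, hδ₀, htay'⟩ := htay _ hd1
    refine ⟨min δ₀ (ε / (2 * (K ^ 2 + 1))), lt_min hδ₀ (by positivity), ?_⟩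
    intro t ht s hs hst
    have hstδ₀ : |s - t| < δ₀ := lt_of_lt_of_le hst (min_le_left _ _)
    have hstδ₁ : |s - t| ≤ ε / (2 * (K ^ 2 + 1)) := (lt_of_lt_of_le hst (min_le_right _ _)).le
    set A : Fin N → Set E3 := lagCell Ω (z t) (wsel t ht) with hAdef
    have h1 : F s ≤ ∑ i, ∫ x in A i, ‖x - z s i‖ ^ 2 := by
      rw [costEq s hs]
      exact cost_le hΩo hΩb hm (hne t ht) (hne s hs) (hwsel t ht) (hwsel s hs)
    have h2 : ∀ i, ∫ x in A i, ‖x - z s i‖ ^ 2 = (∫ x in A i, ‖x - z t i‖ ^ 2)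
        - 2 * ⟪(∫ x in A i, x) - m i • z t i, z s i - z t i⟫ + m i * ‖z s i - z t i‖ ^ 2 :=
      fun i => integral_cost_expand hΩb (lagCell_subset Ω _ _ i) (hvolA t ht i) (z t i) (z s i)
    have h3 : ∀ i, ⟪(∫ x in A i, x) - m i • z t i, g i t⟫ = 0 := by
      intro i
      have e1 : (∫ x in A i, x) - m i • z t i
          = -(m i • (z t i - (m i)⁻¹ • ∫ x in A i, x)) := by
        rw [smul_sub, smul_smul, mul_inv_cancel₀ (hm i).ne', one_smul, neg_sub]
      rw [e1, hgt t ht i, inner_neg_left, real_inner_smul_left]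
      rw [show (∫ x in lagCell Ω (z t) (wsel t ht) i, x) = ∫ x in A i, x from rfl]
      rw [inner_J_self]
      ring
    have h4 : ∀ i, ⟪(∫ x in A i, x) - m i • z t i, z s i - z t i⟫ =
        ⟪(∫ x in A i, x) - m i • z t i, z s i - z t i - (s - t) • g i t⟫ := by
      intro i
      refine Eq.symm ?_
      rw [inner_sub_right, real_inner_smul_right, h3 i, mul_zero, sub_zero]
    have h45 : ∀ i, |⟪(∫ x in A i, x) - m i • z t i, z s i - z t i⟫|
        ≤ m i * Cb * (ε / (2 * (2 * Cb + 1)) * |s - t|) := by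
      intro i
      rw [h4 i]
      refine (abs_real_inner_le_norm _ _).trans ?_
      refine mul_le_mul (hcent t ht i) (htay' i t ht s hs hstδ₀) (norm_nonneg _)
        (mul_nonneg (hm i).le hCb0)
    have hΔ : ∀ i, ‖z s i - z t i‖ ^ 2 ≤ K ^ 2 * (ε / (2 * (K ^ 2 + 1)) * |s - t|) := by
      intro i
      have hb := hlip i t ht s hs
      calc ‖z s i - z t i‖ ^ 2 ≤ (K * |s - t|) ^ 2 :=
            pow_le_pow_left₀ (norm_nonneg _) hb 2
        _ = (K ^ 2 * |s - t|) * |s - t| := by ring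
        _ ≤ (K ^ 2 * (ε / (2 * (K ^ 2 + 1)))) * |s - t| := by
            refine mul_le_mul_of_nonneg_right ?_ (abs_nonneg _)
            exact mul_le_mul_of_nonneg_left hstδ₁ (sq_nonneg K)
        _ = K ^ 2 * (ε / (2 * (K ^ 2 + 1)) * |s - t|) := by ring
    have h7 : ∀ i, (∫ x in A i, ‖x - z s i‖ ^ 2) - (∫ x in A i, ‖x - z t i‖ ^ 2)
        ≤ m i * ((2 * Cb * (ε / (2 * (2 * Cb + 1)))
            + K ^ 2 * (ε / (2 * (K ^ 2 + 1)))) * |s - t|) := by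
      intro i
      rw [h2 i]
      have e : m i * ((2 * Cb * (ε / (2 * (2 * Cb + 1)))
            + K ^ 2 * (ε / (2 * (K ^ 2 + 1)))) * |s - t|)
          = 2 * (m i * Cb * (ε / (2 * (2 * Cb + 1)) * |s - t|))
            + m i * (K ^ 2 * (ε / (2 * (K ^ 2 + 1)) * |s - t|)) := by ring
      have hb1 := h45 i
      have hb2 : m i * ‖z s i - z t i‖ ^ 2
          ≤ m i * (K ^ 2 * (ε / (2 * (K ^ 2 + 1)) * |s - t|)) :=
        mul_le_mul_of_nonneg_left (hΔ i) (hm i).le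
      have hb3 := neg_abs_le (⟪(∫ x in A i, x) - m i • z t i, z s i - z t i⟫ : ℝ)
      linarith [e, hb1, hb2, hb3]
    have hsum : F s - F t ≤ ((2 * Cb * (ε / (2 * (2 * Cb + 1)))
        + K ^ 2 * (ε / (2 * (K ^ 2 + 1)))) * |s - t|) := by
      have hFt := costEq t ht
      have hle : F s - F t ≤ ∑ i, ((∫ x in A i, ‖x - z s i‖ ^ 2)
          - (∫ x in A i, ‖x - z t i‖ ^ 2)) := by
        rw [Finset.sum_sub_distrib, hFt]
        have := h1
        linarith
      refine hle.trans ?_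
      refine (Finset.sum_le_sum fun i _ => h7 i).trans ?_
      rw [← Finset.sum_mul, hm1, one_mul]
    refine hsum.trans ?_
    have hA2 : 2 * Cb * (ε / (2 * (2 * Cb + 1))) ≤ ε / 2 := by
      rw [mul_comm, div_mul_eq_mul_div, div_le_div_iff₀ (by positivity) (by norm_num)]
      nlinarith [hε.le, hCb0]
    have hB2 : K ^ 2 * (ε / (2 * (K ^ 2 + 1))) ≤ ε / 2 := by
      rw [mul_comm, div_mul_eq_mul_div, div_le_div_iff₀ (by positivity) (by norm_num)]
      nlinarith [hε.le, sq_nonneg K]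
    have : 2 * Cb * (ε / (2 * (2 * Cb + 1))) + K ^ 2 * (ε / (2 * (K ^ 2 + 1))) ≤ ε := by
      linarith
    exact mul_le_mul_of_nonneg_right this (abs_nonneg _)
  have hder0 : ∀ t ∈ Icc (0:ℝ) T, HasDerivWithinAt F 0 (Icc 0 T) t := by
    intro t ht
    rw [hasDerivWithinAt_iff_isLittleO, Asymptotics.isLittleO_iff]
    intro c hc
    obtain ⟨δ, hδ, hest⟩ := main_est c hc
    have hmem : ∀ᶠ s' in 𝓝[Icc (0:ℝ) T] t, s' ∈ Icc (0:ℝ) T := eventually_mem_nhdsWithin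
    have hball : ∀ᶠ s' in 𝓝[Icc (0:ℝ) T] t, |s' - t| < δ := by
      have hb : Metric.ball t δ ∈ 𝓝[Icc (0:ℝ) T] t :=
        mem_nhdsWithin_of_mem_nhds (Metric.ball_mem_nhds t hδ)
      filter_upwards [hb] with s' hs'
      simpa [Real.dist_eq] using hs'
    filter_upwards [hmem, hball] with s' hs' hd
    rw [smul_zero, sub_zero, Real.norm_eq_abs, Real.norm_eq_abs]
    have hup := hest t ht s' hs' hd
    have hdn := hest s' hs' t ht (by rwa [abs_sub_comm])
    rw [abs_sub_comm t s'] at hdn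
    have habs : |F s' - F t| ≤ c * |s' - t| := abs_sub_le_iff.mpr ⟨hup, hdn⟩
    exact habs
  have hFcont : ContinuousOn F (Icc 0 T) := fun τ hτ => (hder0 τ hτ).continuousWithinAt
  refine ⟨F 0, fun t ht => ?_⟩
  exact constant_of_has_deriv_right_zero hFcont (fun x hx =>
    (hder0 x (Ico_subset_Icc_self hx)).mono_of_mem_nhdsWithin (Icc_mem_nhdsGE_of_mem hx)) t ht
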